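/- arXiv:1711.08918 — 5 statements merged into one kernel-verified Lean document; each statement's English description precedes it below -/
import Mathlib

section
/- Suppose (X,d,μ) is a metric measure space and p_t(x,y) is a heat kernel satisfying the lower bound p_t(x,y) ≥ t^{−α/β} Φ₁(d(x,y) t^{−1/β}) with Φ₁(1) > 0, and the stochastic bound ∫ p_t(x,y) dμ(y) ≤ 1 for all x, t. Then μ(D(x,r)) ≤ c_μ r^α for all x ∈ X and r > 0, where c_μ := Φ₁(1)^{-1} and D(x,r) is the open ball of radius r. -/
open MeasureTheory
open scoped ENNReal

/-- Volume estimate (7.7): if the heat kernel satisfies the lower bound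
`p_t(x,y) ≥ t^{-α/β} Φ₁(d(x,y) t^{-1/β})` with `Φ₁(1) > 0` and the stochastic bound
`∫ p_t(x,·) dμ ≤ 1`, then `μ(D(x,r)) ≤ Φ₁(1)⁻¹ r^α`. -/
theorem stmt_10 {X : Type*} [MetricSpace X] [MeasurableSpace X] [BorelSpace X]
    (μ : Measure X) (α β : ℝ) (hα : 0 < α) (hβ : 0 < β)
    (Φ₁ : ℝ → ℝ) (hmono : AntitoneOn Φ₁ (Set.Ici 0)) (hΦ₁ : 0 < Φ₁ 1)
    (p : ℝ → X → X → ℝ≥0∞)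
    (hlow : ∀ t > (0 : ℝ), ∀ x y,
      ENNReal.ofReal (t ^ (-(α / β)) * Φ₁ (dist x y / t ^ (1 / β))) ≤ p t x y)
    (hstoch : ∀ x, ∀ t > (0 : ℝ), ∫⁻ y, p t x y ∂μ ≤ 1)
    (x : X) (r : ℝ) (hr : 0 < r) :
    μ (Metric.ball x r) ≤ ENNReal.ofReal ((Φ₁ 1)⁻¹ * r ^ α) := by
  set t := r ^ β with ht
  have htpos : 0 < t := Real.rpow_pos_of_pos hr β
  have hroot : t ^ (1 / β) = r := by
    rw [ht, ← Real.rpow_mul hr.le, mul_one_div, div_self hβ.ne', Real.rpow_one]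
  have hpow : t ^ (-(α / β)) = r ^ (-α) := by
    rw [ht, ← Real.rpow_mul hr.le]
    congr 1
    field_simp
  -- pointwise bound on the ball
  have hc : ∀ y ∈ Metric.ball x r,
      ENNReal.ofReal (r ^ (-α) * Φ₁ 1) ≤ p t x y := by
    intro y hy
    refine le_trans ?_ (hlow t htpos x y)
    rw [hpow, hroot]
    apply ENNReal.ofReal_le_ofReal
    apply mul_le_mul_of_nonneg_left _ (Real.rpow_pos_of_pos hr _).le
    apply hmono (Set.mem_Ici.mpr (by positivity)) (by norm_num : (1:ℝ) ∈ Set.Ici 0)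
    rw [div_le_one hr]
    exact (Metric.mem_ball'.mp hy).le
  have key : μ (Metric.ball x r) * ENNReal.ofReal (r ^ (-α) * Φ₁ 1) ≤ 1 := by
    calc μ (Metric.ball x r) * ENNReal.ofReal (r ^ (-α) * Φ₁ 1)
        = ∫⁻ _ in Metric.ball x r, ENNReal.ofReal (r ^ (-α) * Φ₁ 1) ∂μ := by
          rw [setLIntegral_const, mul_comm]
      _ ≤ ∫⁻ y in Metric.ball x r, p t x y ∂μ :=
          setLIntegral_mono' measurableSet_ball hc
      _ ≤ ∫⁻ y, p t x y ∂μ := setLIntegral_le_lintegral _ _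
      _ ≤ 1 := hstoch x t htpos
  have hcpos : 0 < r ^ (-α) * Φ₁ 1 := by positivity
  have h1 : μ (Metric.ball x r) ≤ (ENNReal.ofReal (r ^ (-α) * Φ₁ 1))⁻¹ := by
    rw [← ENNReal.le_inv_iff_mul_le] at key
    simpa using key
  refine h1.trans_eq ?_
  rw [← ENNReal.ofReal_inv_of_pos hcpos]
  congr 1
  rw [mul_inv, Real.rpow_neg hr.le, inv_inv, mul_comm]
end

section
/- In the same space-time setting with the lower heat-kernel bound p_t(x,y) ≥ t^{−α/β}Φ₁(d(x,y)t^{−1/β}) where Φ₁ is decreasing and Φ₁(1) > 0: choose η ∈ (0,1) with (3η)^{α/β} < Φ₁(1), and set κ := η^{α/β}. Then for all x' = (x,r) ∈ X × ℝ and ρ > 0, setting z' := (x, r + 2η ρ^{β/α}), the cylinder Z_β(x', (κρ)^{1/α}) is contained in the G'-ball B(z', ρ). -/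
open scoped ENNReal

/-- The space-time Green function `G'((x,r),(y,s)) = p_{r-s}(x,y)` for `r > s`, else `0`. -/
noncomputable def Gst {X : Type*} (p : ℝ → X → X → ℝ≥0∞) (x' y' : X × ℝ) : ℝ≥0∞ :=
  if y'.2 < x'.2 then p (x'.2 - y'.2) x'.1 y'.1 else 0

/-- Proposition 7.10: under the lower heat-kernel bound, with `η ∈ (0,1)`,
`(3η)^{α/β} < Φ₁(1)` and `κ = η^{α/β}`, the cylinder `Z_β(x',(κρ)^{1/α})` is contained
in the `G'`-ball `B(z',ρ)` with `z' = (x, r + 2η ρ^{β/α})`. -/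
theorem stmt_15 {X : Type*} [MetricSpace X] (α β : ℝ) (hα : 0 < α) (hβ : 0 < β)
    (Φ₁ : ℝ → ℝ) (hmono : AntitoneOn Φ₁ (Set.Ici 0)) (hΦ₁ : 0 < Φ₁ 1)
    (p : ℝ → X → X → ℝ≥0∞)
    (hlow : ∀ t > (0 : ℝ), ∀ x y,
      ENNReal.ofReal (t ^ (-(α / β)) * Φ₁ (dist x y / t ^ (1 / β))) ≤ p t x y)
    (η : ℝ) (hη0 : 0 < η) (hη1 : η < 1) (hηΦ : (3 * η) ^ (α / β) < Φ₁ 1)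
    (x : X) (r : ℝ) (ρ : ℝ) (hρ : 0 < ρ) (y : X) (s : ℝ)
    (hZ1 : dist x y < (η ^ (α / β) * ρ) ^ (1 / α))
    (hZ2 : |r - s| < ((η ^ (α / β) * ρ) ^ (1 / α)) ^ β) :
    (ENNReal.ofReal ρ)⁻¹ < Gst p (x, r + 2 * η * ρ ^ (β / α)) (y, s) := by
  have hab : 0 < α / β := div_pos hα hβ
  have hba : 0 < β / α := div_pos hβ hα
  have hT : (0:ℝ) < ρ ^ (β / α) := Real.rpow_pos_of_pos hρ _
  set T := ρ ^ (β / α) with hTdef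
  have hTab : T ^ (α / β) = ρ := by
    rw [hTdef, ← Real.rpow_mul hρ.le]
    rw [show β / α * (α / β) = 1 by field_simp, Real.rpow_one]
  have hT1β : T ^ (1 / β) = ρ ^ (1 / α) := by
    rw [hTdef, ← Real.rpow_mul hρ.le]
    rw [show β / α * (1 / β) = 1 / α by field_simp]
  have hηρ : (0:ℝ) < η ^ (α / β) * ρ := by positivity
  have hκβ : ((η ^ (α / β) * ρ) ^ (1 / α)) ^ β = η * T := by
    rw [← Real.rpow_mul hηρ.le, Real.mul_rpow (by positivity) hρ.le,
      ← Real.rpow_mul hη0.le, hTdef,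
      show α / β * (1 / α * β) = 1 by field_simp,
      show (1:ℝ) / α * β = β / α by ring, Real.rpow_one]
  have hκ1 : (η ^ (α / β) * ρ) ^ (1 / α) = η ^ (1 / β) * ρ ^ (1 / α) := by
    rw [Real.mul_rpow (by positivity) hρ.le, ← Real.rpow_mul hη0.le,
      show α / β * (1 / α) = 1 / β by field_simp]
  rw [hκβ] at hZ2
  rw [hκ1] at hZ1
  set t := r + 2 * η * T - s with htdef
  have habs := abs_lt.1 hZ2
  have ht1 : η * T < t := by rw [htdef]; linarith [habs.1]
  have ht2 : t < 3 * η * T := by rw [htdef]; linarith [habs.2]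
  have ht0 : 0 < t := lt_trans (by positivity) ht1
  have hslt : s < r + 2 * η * T := by linarith
  have hG : Gst p (x, r + 2 * η * T) (y, s) = p t x y := by
    simp [Gst, hslt, htdef]
  rw [hG]
  refine lt_of_lt_of_le ?_ (hlow t ht0 x y)
  -- σ := dist x y / t ^ (1/β) < 1
  have htβpos : (0:ℝ) < t ^ (1 / β) := Real.rpow_pos_of_pos ht0 _
  have hσ1 : dist x y / t ^ (1 / β) < 1 := by
    rw [div_lt_one htβpos]
    refine lt_of_lt_of_le hZ1 ?_
    have : η ^ (1 / β) * ρ ^ (1 / α) = (η * T) ^ (1 / β) := by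
      rw [Real.mul_rpow hη0.le hT.le, hT1β]
    rw [this]
    exact Real.rpow_le_rpow (by positivity) ht1.le (by positivity)
  have hσ0 : 0 ≤ dist x y / t ^ (1 / β) := by positivity
  have hΦσ : Φ₁ 1 ≤ Φ₁ (dist x y / t ^ (1 / β)) :=
    hmono hσ0 (by norm_num) hσ1.le
  -- t ^ (α/β) < (3η)^{α/β} ρ
  have htab : t ^ (α / β) < (3 * η) ^ (α / β) * ρ := by
    calc t ^ (α / β) < (3 * η * T) ^ (α / β) :=
          Real.rpow_lt_rpow ht0.le ht2 hab
      _ = (3 * η) ^ (α / β) * ρ := by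
          rw [Real.mul_rpow (by positivity) hT.le, hTab]
  have htabpos : (0:ℝ) < t ^ (α / β) := Real.rpow_pos_of_pos ht0 _
  have hApos : (0:ℝ) < (3 * η) ^ (α / β) := by positivity
  have hinv : ((3 * η) ^ (α / β) * ρ)⁻¹ < t ^ (-(α / β)) := by
    rw [Real.rpow_neg ht0.le]
    exact inv_strictAnti₀ htabpos htab
  have hF : 0 < Φ₁ (dist x y / t ^ (1 / β)) := lt_of_lt_of_le hΦ₁ hΦσ
  have key : ((3 * η) ^ (α / β) * ρ)⁻¹ * (3 * η) ^ (α / β) = ρ⁻¹ := by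
    field_simp
  have hreal : ρ⁻¹ < t ^ (-(α / β)) * Φ₁ (dist x y / t ^ (1 / β)) := by
    calc ρ⁻¹ = ((3 * η) ^ (α / β) * ρ)⁻¹ * (3 * η) ^ (α / β) := key.symm
      _ < ((3 * η) ^ (α / β) * ρ)⁻¹ * Φ₁ 1 :=
          mul_lt_mul_of_pos_left hηΦ (by positivity)
      _ ≤ ((3 * η) ^ (α / β) * ρ)⁻¹ * Φ₁ (dist x y / t ^ (1 / β)) :=
          mul_le_mul_of_nonneg_left hΦσ (by positivity)
      _ < t ^ (-(α / β)) * Φ₁ (dist x y / t ^ (1 / β)) :=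
          mul_lt_mul_of_pos_right hinv hF
  calc (ENNReal.ofReal ρ)⁻¹ = ENNReal.ofReal ρ⁻¹ :=
        (ENNReal.ofReal_inv_of_pos hρ).symm
    _ < ENNReal.ofReal (t ^ (-(α / β)) * Φ₁ (dist x y / t ^ (1 / β))) := by
        exact (ENNReal.ofReal_lt_ofReal_iff
          (mul_pos (Real.rpow_pos_of_pos ht0 _) hF)).2 hreal
end

section
/- Combining the two inclusions: there exist constants C, κ > 0 such that κ · m_{G'}(A) ≤ m_{α,β}(A) ≤ C · m_{G'}(A) for every A ⊆ X × ℝ, where m_{α,β} is the anisotropic Hausdorff measure defined via cylinders Z_β(x',ρ) with gauge ρ^α, and m_{G'} is the intrinsic Hausdorff measure defined via G'-balls with gauge ρ. -/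
open scoped ENNReal

/-- The Hausdorff-type premeasure `m_{η,F}^δ`. -/
noncomputable def mdel {X : Type*} (F : X → ℝ → Set X) (η δ : ℝ) (A : Set X) : ℝ≥0∞ :=
  ⨅ (c : ℕ → X × ℝ) (_ : A ⊆ ⋃ j, F (c j).1 (c j).2)
    (_ : ∀ j, 0 < (c j).2 ∧ (c j).2 < δ), ∑' j, ENNReal.ofReal ((c j).2 ^ η)

/-- The Hausdorff-type measure `m_{η,F} = lim_{δ→0} m_{η,F}^δ`. -/
noncomputable def mH {X : Type*} (F : X → ℝ → Set X) (η : ℝ) (A : Set X) : ℝ≥0∞ :=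
  ⨆ (δ : ℝ) (_ : 0 < δ), mdel F η δ A

/-- The `G'`-ball `B(x',ρ) = {y' : G'(x',y') > 1/ρ}`. -/
def GstBall {X : Type*} (p : ℝ → X → X → ℝ≥0∞) (x' : X × ℝ) (ρ : ℝ) : Set (X × ℝ) :=
  {y' | (ENNReal.ofReal ρ)⁻¹ < Gst p x' y'}

/-- The cylinder `Z_β((x,r),ρ) = {(y,s) : d(x,y) < ρ, |r - s| < ρ^β}`. -/
def Zcyl {X : Type*} [MetricSpace X] (β : ℝ) (x' : X × ℝ) (ρ : ℝ) : Set (X × ℝ) :=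
  {y' | dist x'.1 y'.1 < ρ ∧ |x'.2 - y'.2| < ρ ^ β}

/-- General comparison principle for Hausdorff-type measures (Proposition 2.1):
if every `F`-set of radius `ρ` is contained in a `G`-set of radius `c ρ^{η₁/η₂}`, then
`m_{η₂,G} ≤ c^{η₂} m_{η₁,F}`. -/
lemma comp_mH {X : Type*} (F G : X → ℝ → Set X) (η₁ η₂ c : ℝ)
    (hη₁ : 0 < η₁) (hη₂ : 0 < η₂) (hc : 0 < c) (T : X → ℝ → X)
    (hincl : ∀ x ρ, 0 < ρ → F x ρ ⊆ G (T x ρ) (c * ρ ^ (η₁ / η₂))) (A : Set X) :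
    mH G η₂ A ≤ ENNReal.ofReal (c ^ η₂) * mH F η₁ A := by
  have hexp : 0 < η₁ / η₂ := div_pos hη₁ hη₂
  rw [mH]
  apply iSup₂_le
  intro δ hδ
  set δ' : ℝ := (δ / c) ^ (η₂ / η₁) with hδ'def
  have hδ' : 0 < δ' := Real.rpow_pos_of_pos (div_pos hδ hc) _
  have key : mdel G η₂ δ A ≤ ENNReal.ofReal (c ^ η₂) * mdel F η₁ δ' A := by
    conv_rhs => rw [mdel]
    rw [ENNReal.mul_iInf_of_ne (by positivity) ENNReal.ofReal_ne_top]
    refine le_iInf fun cov => ?_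
    rw [ENNReal.mul_iInf_of_ne (by positivity) ENNReal.ofReal_ne_top]
    refine le_iInf fun hcov => ?_
    rw [ENNReal.mul_iInf_of_ne (by positivity) ENNReal.ofReal_ne_top]
    refine le_iInf fun hrad => ?_
    set cov' : ℕ → X × ℝ := fun j => (T (cov j).1 (cov j).2, c * (cov j).2 ^ (η₁ / η₂))
      with hcov'def
    have hcover' : A ⊆ ⋃ j, G (cov' j).1 (cov' j).2 := by
      refine hcov.trans (Set.iUnion_mono fun j => ?_)
      exact hincl _ _ (hrad j).1
    have hrad' : ∀ j, 0 < (cov' j).2 ∧ (cov' j).2 < δ := by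
      intro j
      obtain ⟨h1, h2⟩ := hrad j
      constructor
      · positivity
      · have : (cov j).2 ^ (η₁ / η₂) < δ' ^ (η₁ / η₂) :=
          Real.rpow_lt_rpow h1.le h2 hexp
        have hδ'pow : δ' ^ (η₁ / η₂) = δ / c := by
          rw [hδ'def, ← Real.rpow_mul (div_pos hδ hc).le]
          rw [show η₂ / η₁ * (η₁ / η₂) = 1 by field_simp, Real.rpow_one]
        calc (cov' j).2 = c * (cov j).2 ^ (η₁ / η₂) := rfl
          _ < c * (δ / c) := by rw [← hδ'pow]; exact (mul_lt_mul_iff_right₀ hc).2 this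
          _ = δ := by field_simp
    calc mdel G η₂ δ A ≤ ∑' j, ENNReal.ofReal ((cov' j).2 ^ η₂) := by
          rw [mdel]
          exact iInf_le_of_le cov' (iInf_le_of_le hcover' (iInf_le _ hrad'))
      _ = ENNReal.ofReal (c ^ η₂) * ∑' j, ENNReal.ofReal ((cov j).2 ^ η₁) := by
          rw [← ENNReal.tsum_mul_left]
          congr 1; funext j
          rw [← ENNReal.ofReal_mul (by positivity)]
          congr 1
          have h1 := (hrad j).1
          rw [show (cov' j).2 = c * (cov j).2 ^ (η₁ / η₂) from rfl,
            Real.mul_rpow hc.le (by positivity), ← Real.rpow_mul h1.le,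
            show η₁ / η₂ * η₂ = η₁ by field_simp]
  refine key.trans (mul_le_mul_right ?_ _)
  exact le_iSup₂ (f := fun δ (_ : 0 < δ) => mdel F η₁ δ A) δ' hδ'

/-- First inclusion: the cylinder `Z_β(x',ρ)` is contained in a `G'`-ball of radius
comparable to `ρ^α`, centered at a time-shifted point. -/
lemma cyl_subset_ball {X : Type*} [MetricSpace X] (α β : ℝ) (hα : 0 < α) (hβ : 0 < β)
    (Φ₁ : ℝ → ℝ) (hmono₁ : AntitoneOn Φ₁ (Set.Ici 0)) (hΦ₁ : 0 < Φ₁ 1)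
    (p : ℝ → X → X → ℝ≥0∞)
    (hlow : ∀ t > (0 : ℝ), ∀ x y,
      ENNReal.ofReal (t ^ (-(α / β)) * Φ₁ (dist x y / t ^ (1 / β))) ≤ p t x y) :
    ∀ (x' : X × ℝ) (ρ : ℝ), 0 < ρ →
    Zcyl β x' ρ ⊆ GstBall p (x'.1, x'.2 + 2 * ρ ^ β) ((3 : ℝ) ^ (α / β) / Φ₁ 1 * ρ ^ α) := by
  rintro ⟨x, r⟩ ρ hρ ⟨y, s⟩ ⟨hd, hts⟩
  simp only at hd hts
  have hρβ : (0 : ℝ) < ρ ^ β := Real.rpow_pos_of_pos hρ β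
  set t : ℝ := r + 2 * ρ ^ β - s with htdef
  have habs := abs_lt.mp hts
  have ht0 : 0 < t := by simp only [htdef]; linarith [habs.1]
  have ht3 : t < 3 * ρ ^ β := by simp only [htdef]; linarith [habs.2]
  have hsr : s < r + 2 * ρ ^ β := by linarith
  simp only [GstBall, Gst, Set.mem_setOf_eq, if_pos hsr]
  refine lt_of_lt_of_le ?_ (hlow t ht0 x y)
  have hκρ : (0:ℝ) < (3 : ℝ) ^ (α / β) / Φ₁ 1 * ρ ^ α := by positivity
  rw [← ENNReal.ofReal_inv_of_pos hκρ]
  rw [ENNReal.ofReal_lt_ofReal_iff_of_nonneg (by positivity)]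
  set σ : ℝ := dist x y / t ^ (1 / β) with hσdef
  have htβ : ρ < t ^ (1 / β) := by
    have h1 : (ρ ^ β) ^ (1 / β) < t ^ (1 / β) :=
      Real.rpow_lt_rpow hρβ.le (by linarith) (by positivity)
    rwa [← Real.rpow_mul hρ.le, mul_one_div, div_self hβ.ne', Real.rpow_one] at h1
  have hσ1 : σ ≤ 1 := by
    rw [hσdef, div_le_one (by positivity)]
    exact hd.le.trans htβ.le
  have hσ0 : 0 ≤ σ := by positivity
  have hΦσ : Φ₁ 1 ≤ Φ₁ σ := hmono₁ hσ0 (Set.mem_Ici.mpr zero_le_one) hσ1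
  have hpow : t ^ (α / β) < 3 ^ (α / β) * ρ ^ α := by
    have h1 : t ^ (α / β) < (3 * ρ ^ β) ^ (α / β) :=
      Real.rpow_lt_rpow ht0.le ht3 (by positivity)
    rwa [Real.mul_rpow (by norm_num) hρβ.le, ← Real.rpow_mul hρ.le,
      show β * (α / β) = α by field_simp] at h1
  have hneg : t ^ (-(α / β)) = (t ^ (α / β))⁻¹ := Real.rpow_neg ht0.le _
  have htpow : (0:ℝ) < t ^ (α / β) := Real.rpow_pos_of_pos ht0 _
  calc ((3 : ℝ) ^ (α / β) / Φ₁ 1 * ρ ^ α)⁻¹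
      = Φ₁ 1 / (3 ^ (α / β) * ρ ^ α) := by
        rw [div_mul_eq_mul_div, inv_div]
    _ < Φ₁ 1 / t ^ (α / β) := by
        apply div_lt_div_of_pos_left hΦ₁ htpow hpow
    _ = t ^ (-(α / β)) * Φ₁ 1 := by rw [hneg]; ring
    _ ≤ t ^ (-(α / β)) * Φ₁ σ := by
        apply mul_le_mul_of_nonneg_left hΦσ (by positivity)

/-- Second inclusion: the `G'`-ball `B(x',ρ)` is contained in the cylinder of radius
comparable to `ρ^{1/α}` with the same center. -/
lemma ball_subset_cyl {X : Type*} [MetricSpace X] (α β : ℝ) (hα : 0 < α) (hβ : 0 < β)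
    (Φ₂ : ℝ → ℝ) (hmono₂ : AntitoneOn Φ₂ (Set.Ici 0))
    (M : ℝ) (hM : ∀ σ ≥ (0 : ℝ), σ ^ α * Φ₂ σ ≤ M)
    (p : ℝ → X → X → ℝ≥0∞)
    (hup : ∀ t > (0 : ℝ), ∀ x y,
      p t x y ≤ ENNReal.ofReal (t ^ (-(α / β)) * Φ₂ (dist x y / t ^ (1 / β)))) :
    ∀ (x' : X × ℝ) (ρ : ℝ), 0 < ρ →
    GstBall p x' ρ ⊆
      Zcyl β x' ((max (max M (Φ₂ 0)) 1) ^ ((1:ℝ)/α) * ρ ^ ((1:ℝ)/α)) := by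
  set c0 : ℝ := max (max M (Φ₂ 0)) 1 with hc0def
  have hc0 : (0:ℝ) < c0 := lt_of_lt_of_le one_pos (le_max_right _ _)
  have hMc0 : M ≤ c0 := le_trans (le_max_left _ _) (le_max_left _ _)
  have hΦ0c0 : Φ₂ 0 ≤ c0 := le_trans (le_max_right _ _) (le_max_left _ _)
  rintro ⟨x, r⟩ ρ hρ ⟨y, s⟩ hy
  simp only [GstBall, Gst, Set.mem_setOf_eq] at hy
  by_cases hsr : s < r
  swap
  · rw [if_neg (by simpa using hsr)] at hy
    exact absurd hy (by simp)
  rw [if_pos (by simpa using hsr)] at hy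
  set t : ℝ := r - s with htdef
  have ht0 : 0 < t := sub_pos.mpr hsr
  have hy' : (ENNReal.ofReal ρ⁻¹) <
      ENNReal.ofReal (t ^ (-(α / β)) * Φ₂ (dist x y / t ^ (1 / β))) := by
    rw [ENNReal.ofReal_inv_of_pos hρ]
    exact lt_of_lt_of_le hy (hup t ht0 x y)
  set σ : ℝ := dist x y / t ^ (1 / β) with hσdef
  have hσ0 : 0 ≤ σ := by positivity
  have hEpos : 0 < t ^ (-(α / β)) * Φ₂ σ := by
    by_contra h
    push_neg at h
    rw [ENNReal.ofReal_eq_zero.mpr h] at hy'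
    exact absurd hy' (by simp)
  have hE : ρ⁻¹ < t ^ (-(α / β)) * Φ₂ σ := (ENNReal.ofReal_lt_ofReal_iff hEpos).mp hy'
  set u : ℝ := t ^ (α / β) with hudef
  have hu0 : (0:ℝ) < u := Real.rpow_pos_of_pos ht0 _
  have hneg : t ^ (-(α / β)) = u⁻¹ := Real.rpow_neg ht0.le _
  rw [hneg] at hE
  have hΦσ2 : Φ₂ σ ≤ Φ₂ 0 := hmono₂ (Set.self_mem_Ici) hσ0 hσ0
  have hu_lt : u < c0 * ρ := by
    have h1 : ρ⁻¹ < Φ₂ σ / u := by rwa [div_eq_inv_mul]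
    have h2 : ρ⁻¹ * u < Φ₂ σ := (lt_div_iff₀ hu0).mp h1
    calc u = ρ * (ρ⁻¹ * u) := by field_simp
      _ < ρ * c0 := mul_lt_mul_of_pos_left (lt_of_lt_of_le h2 (hΦσ2.trans hΦ0c0)) hρ
      _ = c0 * ρ := mul_comm _ _
  have hexp1 : (0:ℝ) < 1 / α := by positivity
  have htime : |r - s| < (c0 ^ ((1:ℝ)/α) * ρ ^ ((1:ℝ)/α)) ^ β := by
    rw [abs_of_pos ht0]
    have h1 : u ^ (β / α) < (c0 * ρ) ^ (β / α) :=
      Real.rpow_lt_rpow hu0.le hu_lt (by positivity)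
    have h2 : u ^ (β / α) = t := by
      rw [hudef, ← Real.rpow_mul ht0.le, show α / β * (β / α) = 1 by field_simp,
        Real.rpow_one]
    have h3 : (c0 * ρ) ^ (β / α) = (c0 ^ ((1:ℝ)/α) * ρ ^ ((1:ℝ)/α)) ^ β := by
      rw [← Real.mul_rpow hc0.le hρ.le, ← Real.rpow_mul (by positivity),
        show 1 / α * β = β / α by ring]
    rw [← h3, ← h2]; exact h1
  refine ⟨?_, htime⟩
  simp only
  rcases eq_or_lt_of_le (dist_nonneg (x := x) (y := y)) with hd0 | hd0
  · rw [← hd0]; positivity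
  have hσpos : 0 < σ := div_pos hd0 (by positivity)
  have hσα : σ ^ α = dist x y ^ α / u := by
    rw [hσdef, Real.div_rpow dist_nonneg (by positivity), hudef,
      ← Real.rpow_mul ht0.le, show 1 / β * α = α / β by ring]
  have hΦσlb : ρ⁻¹ * u < Φ₂ σ := by
    have h1 : ρ⁻¹ < Φ₂ σ / u := by rwa [div_eq_inv_mul]
    exact (lt_div_iff₀ hu0).mp h1
  have hσαpos : 0 < σ ^ α := Real.rpow_pos_of_pos hσpos _
  have hkey : dist x y ^ α * ρ⁻¹ < M := by
    have h1 : σ ^ α * (ρ⁻¹ * u) < σ ^ α * Φ₂ σ := mul_lt_mul_of_pos_left hΦσlb hσαpos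
    have h2 : σ ^ α * (ρ⁻¹ * u) = dist x y ^ α * ρ⁻¹ := by
      rw [hσα]; field_simp
    rw [h2] at h1
    exact lt_of_lt_of_le h1 (hM σ hσ0)
  have hdα : dist x y ^ α < c0 * ρ := by
    calc dist x y ^ α = ρ * (dist x y ^ α * ρ⁻¹) := by field_simp
      _ < ρ * c0 := mul_lt_mul_of_pos_left (lt_of_lt_of_le hkey hMc0) hρ
      _ = c0 * ρ := mul_comm _ _
  have h1 : (dist x y ^ α) ^ ((1:ℝ)/α) < (c0 * ρ) ^ ((1:ℝ)/α) :=
    Real.rpow_lt_rpow (by positivity) hdα hexp1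
  rwa [← Real.rpow_mul dist_nonneg, show α * (1/α) = 1 by field_simp, Real.rpow_one,
    Real.mul_rpow hc0.le hρ.le] at h1

/-- Comparison of the intrinsic Hausdorff measure `m_{G'}` with the anisotropic Hausdorff
measure `m_{α,β}`: there are constants `C, κ > 0` with
`κ m_{G'}(A) ≤ m_{α,β}(A) ≤ C m_{G'}(A)` for every `A ⊆ X × ℝ`. -/
theorem stmt_16 {X : Type*} [MetricSpace X] (α β : ℝ) (hα : 0 < α) (hβ : 0 < β)
    (Φ₁ Φ₂ : ℝ → ℝ) (hmono₁ : AntitoneOn Φ₁ (Set.Ici 0))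
    (hmono₂ : AntitoneOn Φ₂ (Set.Ici 0)) (hpos₂ : ∀ σ ≥ (0 : ℝ), 0 ≤ Φ₂ σ)
    (hΦ₁ : 0 < Φ₁ 1) (M : ℝ) (hM : ∀ σ ≥ (0 : ℝ), σ ^ α * Φ₂ σ ≤ M)
    (p : ℝ → X → X → ℝ≥0∞)
    (hlow : ∀ t > (0 : ℝ), ∀ x y,
      ENNReal.ofReal (t ^ (-(α / β)) * Φ₁ (dist x y / t ^ (1 / β))) ≤ p t x y)
    (hup : ∀ t > (0 : ℝ), ∀ x y,
      p t x y ≤ ENNReal.ofReal (t ^ (-(α / β)) * Φ₂ (dist x y / t ^ (1 / β)))) :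
    ∃ C κ : ℝ, 0 < C ∧ 0 < κ ∧ ∀ A : Set (X × ℝ),
      ENNReal.ofReal κ * mH (GstBall p) 1 A ≤ mH (Zcyl β) α A ∧
      mH (Zcyl β) α A ≤ ENNReal.ofReal C * mH (GstBall p) 1 A := by
  set c0 : ℝ := max (max M (Φ₂ 0)) 1 with hc0def
  have hc0 : (0:ℝ) < c0 := lt_of_lt_of_le one_pos (le_max_right _ _)
  set κ'' : ℝ := (3 : ℝ) ^ (α / β) / Φ₁ 1 with hκ''def
  have hκ'' : 0 < κ'' := by positivity
  refine ⟨c0, κ''⁻¹, hc0, by positivity, fun A => ?_⟩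
  constructor
  · -- lower bound: κ m_{G'} ≤ m_{α,β}
    have hB : mH (GstBall p) 1 A ≤ ENNReal.ofReal (κ'' ^ (1:ℝ)) * mH (Zcyl β) α A := by
      refine comp_mH (Zcyl β) (GstBall p) α 1 κ'' hα one_pos hκ''
        (fun x' ρ => (x'.1, x'.2 + 2 * ρ ^ β)) ?_ A
      intro x' ρ hρ
      simpa using cyl_subset_ball α β hα hβ Φ₁ hmono₁ hΦ₁ p hlow x' ρ hρ
    rw [Real.rpow_one] at hB
    calc ENNReal.ofReal κ''⁻¹ * mH (GstBall p) 1 A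
        ≤ ENNReal.ofReal κ''⁻¹ * (ENNReal.ofReal κ'' * mH (Zcyl β) α A) :=
          mul_le_mul_right hB _
      _ = ENNReal.ofReal (κ''⁻¹ * κ'') * mH (Zcyl β) α A := by
          rw [ENNReal.ofReal_mul (by positivity), mul_assoc]
      _ = mH (Zcyl β) α A := by
          rw [inv_mul_cancel₀ hκ''.ne', ENNReal.ofReal_one, one_mul]
  · -- upper bound: m_{α,β} ≤ C m_{G'}
    have hA : mH (Zcyl β) α A ≤
        ENNReal.ofReal ((c0 ^ ((1:ℝ)/α)) ^ α) * mH (GstBall p) 1 A := by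
      refine comp_mH (GstBall p) (Zcyl β) 1 α (c0 ^ ((1:ℝ)/α)) one_pos hα
        (by positivity) (fun x' _ => x') ?_ A
      intro x' ρ hρ
      exact ball_subset_cyl α β hα hβ Φ₂ hmono₂ M hM p hup x' ρ hρ
    rwa [← Real.rpow_mul hc0.le, show (1:ℝ)/α * α = 1 by field_simp,
      Real.rpow_one] at hA
end

section
/- For the heat equation on ℝ^{n+1} with Green function G(x',y') := G_0(x'−y') (Gauss–Weierstrass kernel G_0(x,t) = 1_{t>0} t^{-n/2} e^{-|x|²/(4t)}), the intrinsic Hausdorff measure m_G and the parabolic Hausdorff-type measure m_{n,P} (using boxes P(x',ρ) = x' + [−ρ/2,ρ/2]ⁿ × [−ρ²/2,ρ²/2] with gauge ρⁿ) satisfy m_{n,P}(A) ≤ 2ⁿ n^{n/2} m_G(A) and m_G(A) ≤ 2^{n/2} m_{n,P}(A) for every A ⊆ ℝ^{n+1}. -/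
open scoped ENNReal

/-- The Gauss–Weierstrass kernel `G₀(x,t) = 1_{t>0} t^{-n/2} exp(-|x|²/(4t))`. -/
noncomputable def G0 (n : ℕ) (x : EuclideanSpace ℝ (Fin n)) (t : ℝ) : ℝ :=
  if 0 < t then t ^ (-(n : ℝ) / 2) * Real.exp (-‖x‖ ^ 2 / (4 * t)) else 0

/-- The Green function of the heat equation: `G(x',y') = G₀(x' - y')`. -/
noncomputable def Gheat (n : ℕ) (x' y' : EuclideanSpace ℝ (Fin n) × ℝ) : ℝ :=
  G0 n (x'.1 - y'.1) (x'.2 - y'.2)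

/-- The heat ball `B(x',ρ) = {y' : G(x',y') > 1/ρ}`. -/
def heatBall (n : ℕ) (x' : EuclideanSpace ℝ (Fin n) × ℝ) (ρ : ℝ) :
    Set (EuclideanSpace ℝ (Fin n) × ℝ) :=
  {y' | 1 / ρ < Gheat n x' y'}

/-- The parabolic box `P(x',ρ) = x' + [-ρ/2,ρ/2]ⁿ × [-ρ²/2,ρ²/2]`. -/
def parBox (n : ℕ) (x' : EuclideanSpace ℝ (Fin n) × ℝ) (ρ : ℝ) :
    Set (EuclideanSpace ℝ (Fin n) × ℝ) :=
  {y' | (∀ i, |y'.1 i - x'.1 i| ≤ ρ / 2) ∧ |y'.2 - x'.2| ≤ ρ ^ 2 / 2}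

lemma log_le_div_exp_one {x : ℝ} (hx : 0 < x) : Real.log x ≤ x / Real.exp 1 := by
  have h := Real.log_le_sub_one_of_pos (div_pos hx (Real.exp_pos 1))
  rw [Real.log_div hx.ne' (Real.exp_pos 1).ne', Real.log_exp] at h
  linarith
lemma coord_le_norm {n : ℕ} (z : EuclideanSpace ℝ (Fin n)) (i : Fin n) : |z i| ≤ ‖z‖ := by
  rw [EuclideanSpace.norm_eq, ← Real.sqrt_sq_eq_abs]
  apply Real.sqrt_le_sqrt
  have : z i ^ 2 = ‖z i‖ ^ 2 := by rw [Real.norm_eq_abs, sq_abs]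
  rw [this]
  exact Finset.single_le_sum (f := fun j => ‖z j‖ ^ 2) (fun j _ => sq_nonneg _)
    (Finset.mem_univ i)
lemma norm_sq_eq {n : ℕ} (z : EuclideanSpace ℝ (Fin n)) : ‖z‖ ^ 2 = ∑ i, z i ^ 2 := by
  rw [EuclideanSpace.norm_eq, Real.sq_sqrt (by positivity)]
  congr 1; ext i; rw [Real.norm_eq_abs, sq_abs]
lemma heatBall_subset (n : ℕ) (hn : 1 ≤ n) (x : EuclideanSpace ℝ (Fin n) × ℝ) (ρ : ℝ)
    (hρ : 0 < ρ) :
    heatBall n x ρ ⊆ parBox n x (2 * Real.sqrt n * ρ ^ ((1 : ℝ) / n)) := by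
  intro y hy
  have hn0 : (0 : ℝ) < n := by exact_mod_cast Nat.lt_of_lt_of_le Nat.zero_lt_one hn
  simp only [heatBall, Set.mem_setOf_eq, Gheat, G0] at hy
  set z : EuclideanSpace ℝ (Fin n) := x.1 - y.1 with hz
  set s : ℝ := x.2 - y.2 with hs
  have hρ' : (0 : ℝ) < 1 / ρ := by positivity
  have hspos : 0 < s := by
    by_contra h
    rw [if_neg h] at hy
    linarith
  rw [if_pos hspos] at hy
  set c : ℝ := ρ ^ ((2 : ℝ) / n) with hc
  have hcpos : 0 < c := Real.rpow_pos_of_pos hρ _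
  have hsrpos : (0 : ℝ) < s ^ ((n : ℝ) / 2) := Real.rpow_pos_of_pos hspos _
  have hneg : s ^ (-(n : ℝ) / 2) = (s ^ ((n : ℝ) / 2))⁻¹ := by
    rw [neg_div, Real.rpow_neg hspos.le]
  -- step 1 : s ^ (n/2) < ρ
  have hexple : Real.exp (-‖z‖ ^ 2 / (4 * s)) ≤ 1 := by
    apply Real.exp_le_one_iff.mpr
    have : (0:ℝ) ≤ ‖z‖ ^ 2 / (4 * s) := by positivity
    rw [neg_div]
    linarith
  have hsn : s ^ ((n : ℝ) / 2) < ρ := by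
    have h1 : 1 / ρ < (s ^ ((n : ℝ) / 2))⁻¹ := by
      calc 1 / ρ < s ^ (-(n : ℝ) / 2) * Real.exp (-‖z‖ ^ 2 / (4 * s)) := hy
        _ ≤ s ^ (-(n : ℝ) / 2) := by
            rw [hneg]
            exact mul_le_of_le_one_right (by positivity) hexple
        _ = (s ^ ((n : ℝ) / 2))⁻¹ := hneg
    rw [one_div] at h1
    exact (inv_lt_inv₀ hρ hsrpos).mp h1
  have hslt : s < c := by
    calc s = (s ^ ((n : ℝ) / 2)) ^ ((2 : ℝ) / n) := by
          rw [← Real.rpow_mul hspos.le]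
          rw [show ((n : ℝ) / 2) * ((2 : ℝ) / n) = 1 by field_simp]
          exact (Real.rpow_one s).symm
      _ < c := Real.rpow_lt_rpow hsrpos.le hsn (by positivity)
  -- step 2 : ‖z‖^2 ≤ n * c
  have h2 : s ^ ((n : ℝ) / 2) / ρ < Real.exp (-‖z‖ ^ 2 / (4 * s)) := by
    rw [hneg] at hy
    have hmul := mul_lt_mul_of_pos_left hy hsrpos
    calc s ^ ((n : ℝ) / 2) / ρ = s ^ ((n : ℝ) / 2) * (1 / ρ) := by ring
      _ < s ^ ((n : ℝ) / 2) * ((s ^ ((n : ℝ) / 2))⁻¹ * Real.exp (-‖z‖ ^ 2 / (4 * s))) := hmul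
      _ = Real.exp (-‖z‖ ^ 2 / (4 * s)) := by field_simp
  have hlogρ : Real.log ρ = ((n : ℝ) / 2) * Real.log c := by
    rw [hc, Real.log_rpow hρ]
    field_simp
  have h3 : ‖z‖ ^ 2 < 2 * n * s * Real.log (c / s) := by
    have hl := Real.log_lt_log (by positivity) h2
    rw [Real.log_exp, Real.log_div hsrpos.ne' hρ.ne', Real.log_rpow hspos, hlogρ] at hl
    rw [Real.log_div hcpos.ne' hspos.ne']
    have h4s : (0:ℝ) < 4 * s := by linarith
    have h5 : ‖z‖ ^ 2 / (4 * s) < (n : ℝ) / 2 * (Real.log c - Real.log s) := by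
      rw [neg_div, lt_neg] at hl
      linarith
    rw [div_lt_iff₀ h4s] at h5
    have h6 : (n : ℝ) / 2 * (Real.log c - Real.log s) * (4 * s)
        = 2 * n * s * (Real.log c - Real.log s) := by ring
    rw [← h6]
    exact h5
  have hzc : ‖z‖ ^ 2 ≤ n * c := by
    have hlog := log_le_div_exp_one (div_pos hcpos hspos)
    have he : (2 : ℝ) ≤ Real.exp 1 := by linarith [Real.exp_one_gt_d9]
    have hcs : s * (c / s) = c := mul_div_cancel₀ c hspos.ne'
    have hstep : 2 * n * s * Real.log (c / s) ≤ 2 * n * c / Real.exp 1 := by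
      have h1 : 2 * n * s * Real.log (c / s) ≤ 2 * n * s * ((c / s) / Real.exp 1) := by
        apply mul_le_mul_of_nonneg_left hlog (by positivity)
      have h2' : 2 * n * s * ((c / s) / Real.exp 1) = 2 * n * c / Real.exp 1 := by
        field_simp
      linarith
    have hfin : 2 * n * c / Real.exp 1 ≤ n * c := by
      rw [div_le_iff₀ (Real.exp_pos 1)]
      nlinarith [mul_nonneg (show (0:ℝ) ≤ Real.exp 1 - 2 by linarith)
        (le_of_lt (mul_pos hn0 hcpos))]
    linarith
  constructor
  · intro i
    have habs : |y.1 i - x.1 i| = |z i| := by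
      rw [hz]
      have : (x.1 - y.1) i = x.1 i - y.1 i := rfl
      rw [this, abs_sub_comm]
    rw [habs]
    have h1 : |z i| ≤ ‖z‖ := coord_le_norm z i
    have h2' : ‖z‖ ≤ Real.sqrt (n * c) := by
      rw [← Real.sqrt_sq (norm_nonneg z)]
      exact Real.sqrt_le_sqrt hzc
    have h3' : Real.sqrt ((n:ℝ) * c) = Real.sqrt n * ρ ^ ((1 : ℝ) / n) := by
      rw [Real.sqrt_mul (le_of_lt hn0)]
      congr 1
      rw [hc, Real.sqrt_eq_rpow, ← Real.rpow_mul hρ.le]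
      congr 1
      field_simp
    have : 2 * Real.sqrt n * ρ ^ ((1 : ℝ) / n) / 2 = Real.sqrt n * ρ ^ ((1 : ℝ) / n) := by
      ring
    rw [this]
    calc |z i| ≤ ‖z‖ := h1
      _ ≤ Real.sqrt (n * c) := h2'
      _ = Real.sqrt n * ρ ^ ((1 : ℝ) / n) := h3'
  · have habs : |y.2 - x.2| = s := by
      rw [abs_sub_comm]
      exact abs_of_pos hspos
    rw [habs]
    have hsq : (2 * Real.sqrt n * ρ ^ ((1 : ℝ) / n)) ^ 2 = 4 * n * c := by
      have h1 : Real.sqrt n ^ 2 = n := Real.sq_sqrt hn0.le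
      have h2' : (ρ ^ ((1 : ℝ) / n)) ^ 2 = c := by
        rw [hc, ← Real.rpow_natCast (ρ ^ ((1 : ℝ) / n)) 2, ← Real.rpow_mul hρ.le]
        congr 1
        push_cast
        field_simp
      rw [mul_pow, mul_pow, h1, h2']
      ring
    rw [hsq]
    have h1n : (1:ℝ) ≤ n := by exact_mod_cast hn
    have : c ≤ 2 * n * c := by
      nlinarith [mul_pos (show (0:ℝ) < 2 * n - 1 by linarith) hcpos]
    linarith
lemma key_ineq (n : ℕ) (hn : 1 ≤ n) :
    Real.exp ((n : ℝ) / 8) < (4 / 3 : ℝ) ^ ((n : ℝ) / 2) := by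
  have h14 : Real.exp (4⁻¹ : ℝ) < 4 / 3 := by
    have h4 : Real.exp (4⁻¹ : ℝ) ^ (4 : ℕ) = Real.exp 1 := by
      rw [← Real.exp_nat_mul]; norm_num
    by_contra hcon
    push_neg at hcon
    have h := pow_le_pow_left₀ (by norm_num : (0:ℝ) ≤ 4/3) hcon 4
    rw [h4] at h
    have := Real.exp_one_lt_d9
    norm_num at h
    linarith
  have hp : (0 : ℝ) < (n : ℝ) / 2 := by
    have : (1 : ℝ) ≤ n := by exact_mod_cast hn
    linarith
  calc Real.exp ((n : ℝ) / 8) = Real.exp (4⁻¹ : ℝ) ^ ((n : ℝ) / 2) := by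
        rw [← Real.exp_one_rpow (4⁻¹ : ℝ), ← Real.rpow_mul (Real.exp_pos 1).le,
          Real.exp_one_rpow]
        norm_num; ring
    _ < (4 / 3 : ℝ) ^ ((n : ℝ) / 2) :=
        Real.rpow_lt_rpow (Real.exp_pos _).le h14 hp
lemma parBox_subset (n : ℕ) (hn : 1 ≤ n) (x : EuclideanSpace ℝ (Fin n) × ℝ) (ρ : ℝ)
    (hρ : 0 < ρ) :
    parBox n x ρ ⊆ heatBall n (x.1, x.2 + ρ ^ 2) (2 ^ ((n : ℝ) / 2) * ρ ^ (n : ℝ)) := by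
  rintro y ⟨hy1, hy2⟩
  have hn0 : (0 : ℝ) < n := by exact_mod_cast Nat.lt_of_lt_of_le Nat.zero_lt_one hn
  simp only [heatBall, Set.mem_setOf_eq, Gheat, G0]
  set z : EuclideanSpace ℝ (Fin n) := x.1 - y.1 with hz
  have hs1 : ρ ^ 2 / 2 ≤ x.2 + ρ ^ 2 - y.2 := by
    have := abs_le.mp hy2
    linarith [this.1, this.2]
  have hs2 : x.2 + ρ ^ 2 - y.2 ≤ 3 * ρ ^ 2 / 2 := by
    have := abs_le.mp hy2
    linarith [this.1, this.2]
  set s : ℝ := x.2 + ρ ^ 2 - y.2 with hs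
  have hspos : 0 < s := lt_of_lt_of_le (by positivity) hs1
  rw [if_pos hspos]
  have hρn : (0:ℝ) < ρ ^ (n : ℝ) := Real.rpow_pos_of_pos hρ _
  have hsrpos : (0 : ℝ) < s ^ ((n : ℝ) / 2) := Real.rpow_pos_of_pos hspos _
  have hneg : s ^ (-(n : ℝ) / 2) = (s ^ ((n : ℝ) / 2))⁻¹ := by
    rw [neg_div, Real.rpow_neg hspos.le]
  -- ‖z‖² ≤ n ρ²/4
  have hzz : ‖z‖ ^ 2 ≤ n * ρ ^ 2 / 4 := by
    rw [norm_sq_eq]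
    calc ∑ i, z i ^ 2 ≤ ∑ _i : Fin n, (ρ / 2) ^ 2 := by
          apply Finset.sum_le_sum
          intro i _
          have hzi : |z i| ≤ ρ / 2 := by
            have : z i = x.1 i - y.1 i := rfl
            rw [this, abs_sub_comm]
            exact hy1 i
          calc z i ^ 2 = |z i| ^ 2 := (sq_abs _).symm
            _ ≤ (ρ / 2) ^ 2 := by
                apply pow_le_pow_left₀ (abs_nonneg _) hzi
      _ = n * ρ ^ 2 / 4 := by
          rw [Finset.sum_const, Finset.card_univ, Fintype.card_fin]
          push_cast; ring
  have hexp : Real.exp (-(n : ℝ) / 8) ≤ Real.exp (-‖z‖ ^ 2 / (4 * s)) := by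
    apply Real.exp_le_exp.mpr
    rw [neg_div, neg_div, neg_le_neg_iff]
    rw [div_le_div_iff₀ (by linarith) (by norm_num : (0:ℝ) < 8)]
    nlinarith [hzz, hs1, sq_nonneg ρ, hn0]
  have hsn : s ^ ((n : ℝ) / 2) ≤ (3 / 2 : ℝ) ^ ((n : ℝ) / 2) * ρ ^ (n : ℝ) := by
    have hsle : s ≤ 3 / 2 * ρ ^ 2 := by linarith
    calc s ^ ((n : ℝ) / 2) ≤ (3 / 2 * ρ ^ 2) ^ ((n : ℝ) / 2) :=
          Real.rpow_le_rpow hspos.le hsle (by positivity)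
      _ = (3 / 2 : ℝ) ^ ((n : ℝ) / 2) * (ρ ^ 2) ^ ((n : ℝ) / 2) :=
          Real.mul_rpow (by norm_num) (sq_nonneg ρ)
      _ = (3 / 2 : ℝ) ^ ((n : ℝ) / 2) * ρ ^ (n : ℝ) := by
          congr 1
          rw [← Real.rpow_natCast ρ 2, ← Real.rpow_mul hρ.le]
          norm_num
          rw [show (2 * ((n:ℝ)/2)) = (n:ℝ) by ring]
          exact Real.rpow_natCast ρ n
  have key := key_ineq n hn
  -- strict constant inequality
  have hconst : (3 / 2 : ℝ) ^ ((n : ℝ) / 2) < Real.exp (-(n : ℝ) / 8) * 2 ^ ((n : ℝ) / 2) := by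
    have h32 : (0:ℝ) < (3 / 2 : ℝ) ^ ((n : ℝ) / 2) := by positivity
    have hmul : Real.exp ((n : ℝ) / 8) * (3 / 2 : ℝ) ^ ((n : ℝ) / 2)
        < (4 / 3 : ℝ) ^ ((n : ℝ) / 2) * (3 / 2 : ℝ) ^ ((n : ℝ) / 2) :=
      mul_lt_mul_of_pos_right key h32
    rw [← Real.mul_rpow (by norm_num) (by norm_num)] at hmul
    norm_num at hmul
    have hee : Real.exp (-(n : ℝ) / 8) = (Real.exp ((n : ℝ) / 8))⁻¹ := by
      rw [← Real.exp_neg]; ring_nf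
    rw [hee, inv_mul_eq_div, lt_div_iff₀ (Real.exp_pos _)]
    linarith [hmul]
  -- final chain
  have hfrac : 1 / (2 ^ ((n : ℝ) / 2) * ρ ^ (n : ℝ))
      < Real.exp (-(n : ℝ) / 8) / ((3 / 2 : ℝ) ^ ((n : ℝ) / 2) * ρ ^ (n : ℝ)) := by
    rw [div_lt_div_iff₀ (by positivity) (by positivity)]
    calc 1 * ((3 / 2 : ℝ) ^ ((n : ℝ) / 2) * ρ ^ (n : ℝ))
        = (3 / 2 : ℝ) ^ ((n : ℝ) / 2) * ρ ^ (n : ℝ) := by ring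
      _ < (Real.exp (-(n : ℝ) / 8) * 2 ^ ((n : ℝ) / 2)) * ρ ^ (n : ℝ) :=
          mul_lt_mul_of_pos_right hconst hρn
      _ = Real.exp (-(n : ℝ) / 8) * (2 ^ ((n : ℝ) / 2) * ρ ^ (n : ℝ)) := by ring
  calc 1 / (2 ^ ((n : ℝ) / 2) * ρ ^ (n : ℝ))
      < Real.exp (-(n : ℝ) / 8) / ((3 / 2 : ℝ) ^ ((n : ℝ) / 2) * ρ ^ (n : ℝ)) := hfrac
    _ ≤ Real.exp (-‖z‖ ^ 2 / (4 * s)) / s ^ ((n : ℝ) / 2) :=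
        div_le_div₀ (Real.exp_pos _).le hexp hsrpos hsn
    _ = s ^ (-(n : ℝ) / 2) * Real.exp (-‖z‖ ^ 2 / (4 * s)) := by
        rw [hneg, div_eq_inv_mul]
lemma mdel_le_tsum {X : Type*} (F : X → ℝ → Set X) (η δ : ℝ) (A : Set X) (c : ℕ → X × ℝ)
    (hc : A ⊆ ⋃ j, F (c j).1 (c j).2) (hρ : ∀ j, 0 < (c j).2 ∧ (c j).2 < δ) :
    mdel F η δ A ≤ ∑' j, ENNReal.ofReal ((c j).2 ^ η) :=
  iInf_le_of_le c (iInf_le_of_le hc (iInf_le _ hρ))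
lemma mdel_comp {X : Type*} (F G : X → ℝ → Set X) (η θ : ℝ) (C : ℝ) (hC : 0 < C)
    (φ : X → ℝ → X) (r : ℝ → ℝ) (δ δ' : ℝ)
    (hsub : ∀ x ρ, 0 < ρ → G x ρ ⊆ F (φ x ρ) (r ρ))
    (hr : ∀ ρ, 0 < ρ → ρ < δ → 0 < r ρ ∧ r ρ < δ')
    (hcost : ∀ ρ, 0 < ρ → r ρ ^ η ≤ C * ρ ^ θ) (A : Set X) :
    mdel F η δ' A ≤ ENNReal.ofReal C * mdel G θ δ A := by
  have hC0 : ENNReal.ofReal C ≠ 0 := by simp [ENNReal.ofReal_eq_zero, not_le, hC]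
  have hCt : ENNReal.ofReal C ≠ ⊤ := ENNReal.ofReal_ne_top
  rw [mul_comm, ← ENNReal.div_le_iff hC0 hCt]
  unfold mdel
  refine le_iInf fun c => le_iInf fun hcov => le_iInf fun hcond => ?_
  rw [ENNReal.div_le_iff hC0 hCt, mul_comm]
  set c' : ℕ → X × ℝ := fun j => (φ (c j).1 (c j).2, r (c j).2) with hc'
  have hcov' : A ⊆ ⋃ j, F (c' j).1 (c' j).2 :=
    hcov.trans (Set.iUnion_mono fun j => hsub _ _ (hcond j).1)
  have hcond' : ∀ j, 0 < (c' j).2 ∧ (c' j).2 < δ' := fun j => hr _ (hcond j).1 (hcond j).2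
  calc mdel F η δ' A ≤ ∑' j, ENNReal.ofReal ((c' j).2 ^ η) :=
        mdel_le_tsum F η δ' A c' hcov' hcond'
    _ ≤ ∑' j, ENNReal.ofReal C * ENNReal.ofReal ((c j).2 ^ θ) := by
        refine ENNReal.tsum_le_tsum fun j => ?_
        rw [← ENNReal.ofReal_mul hC.le]
        exact ENNReal.ofReal_le_ofReal (hcost _ (hcond j).1)
    _ = ENNReal.ofReal C * ∑' j, ENNReal.ofReal ((c j).2 ^ θ) := ENNReal.tsum_mul_left
lemma mH_comp {X : Type*} (F G : X → ℝ → Set X) (η θ : ℝ) (C : ℝ) (hC : 0 < C)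
    (φ : X → ℝ → X) (r : ℝ → ℝ)
    (hsub : ∀ x ρ, 0 < ρ → G x ρ ⊆ F (φ x ρ) (r ρ))
    (hrpos : ∀ ρ, 0 < ρ → 0 < r ρ)
    (hlim : ∀ δ' > (0:ℝ), ∃ δ > (0:ℝ), ∀ ρ, 0 < ρ → ρ < δ → r ρ < δ')
    (hcost : ∀ ρ, 0 < ρ → r ρ ^ η ≤ C * ρ ^ θ) (A : Set X) :
    mH F η A ≤ ENNReal.ofReal C * mH G θ A := by
  rw [mH]
  refine iSup₂_le fun δ' hδ' => ?_
  obtain ⟨δ, hδ, hrδ⟩ := hlim δ' hδ'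
  calc mdel F η δ' A ≤ ENNReal.ofReal C * mdel G θ δ A :=
        mdel_comp F G η θ C hC φ r δ δ' hsub
          (fun ρ h1 h2 => ⟨hrpos ρ h1, hrδ ρ h1 h2⟩) hcost A
    _ ≤ ENNReal.ofReal C * mH G θ A :=
        mul_le_mul_right (le_iSup₂ (f := fun d (_ : 0 < d) => mdel G θ d A) δ hδ) _
lemma rpow_one_div_nat {n : ℕ} (hn : 1 ≤ n) {a : ℝ} (ha : 0 ≤ a) :
    (a ^ ((1 : ℝ) / n)) ^ (n : ℝ) = a := by
  have hn0 : (n : ℝ) ≠ 0 := Nat.cast_ne_zero.mpr (by omega)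
  rw [← Real.rpow_mul ha, show (1 : ℝ) / n * n = 1 by field_simp, Real.rpow_one]
lemma rpow_nat_one_div {n : ℕ} (hn : 1 ≤ n) {a : ℝ} (ha : 0 ≤ a) :
    (a ^ (n : ℝ)) ^ ((1 : ℝ) / n) = a := by
  have hn0 : (n : ℝ) ≠ 0 := Nat.cast_ne_zero.mpr (by omega)
  rw [← Real.rpow_mul ha, show (n : ℝ) * ((1 : ℝ) / n) = 1 by field_simp, Real.rpow_one]

/-- Proposition 5.3: `m_{n,P}(A) ≤ 2ⁿ n^{n/2} m_G(A)` and `m_G(A) ≤ 2^{n/2} m_{n,P}(A)`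
for every `A ⊆ ℝ^{n+1}`. -/
theorem stmt_17 (n : ℕ) (hn : 1 ≤ n) (A : Set (EuclideanSpace ℝ (Fin n) × ℝ)) :
    mH (parBox n) (n : ℝ) A ≤
        ENNReal.ofReal (2 ^ n * (n : ℝ) ^ ((n : ℝ) / 2)) * mH (heatBall n) 1 A ∧
      mH (heatBall n) 1 A ≤
        ENNReal.ofReal ((2 : ℝ) ^ ((n : ℝ) / 2)) * mH (parBox n) (n : ℝ) A := by
  have hn0 : (0 : ℝ) < n := by exact_mod_cast Nat.lt_of_lt_of_le Nat.zero_lt_one hn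
  have hsq : (0 : ℝ) < 2 * Real.sqrt n := by
    have := Real.sqrt_pos.mpr hn0
    linarith
  constructor
  · -- m_P ≤ 2^n n^{n/2} m_G
    apply mH_comp (parBox n) (heatBall n) (n : ℝ) 1 (2 ^ n * (n : ℝ) ^ ((n : ℝ) / 2))
      (by positivity) (fun x _ => x) (fun ρ => 2 * Real.sqrt n * ρ ^ ((1 : ℝ) / n))
    · exact fun x ρ hρ => heatBall_subset n hn x ρ hρ
    · intro ρ hρ
      exact mul_pos hsq (Real.rpow_pos_of_pos hρ _)
    · intro δ' hδ'
      refine ⟨(δ' / (2 * Real.sqrt n)) ^ (n : ℝ), Real.rpow_pos_of_pos (by positivity) _,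
        fun ρ hρ hρδ => ?_⟩
      have h1 : ρ ^ ((1 : ℝ) / n) < δ' / (2 * Real.sqrt n) := by
        have h2 := Real.rpow_lt_rpow hρ.le hρδ
          (show (0 : ℝ) < (1 : ℝ) / n by positivity)
        rwa [rpow_nat_one_div hn (by positivity)] at h2
      calc 2 * Real.sqrt n * ρ ^ ((1 : ℝ) / n)
          < 2 * Real.sqrt n * (δ' / (2 * Real.sqrt n)) := by
            exact mul_lt_mul_of_pos_left h1 hsq
        _ = δ' := by field_simp
    · intro ρ hρ
      have f2 : (ρ ^ ((1 : ℝ) / n)) ^ (n : ℝ) = ρ := rpow_one_div_nat hn hρ.le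
      have f1 : ((2 : ℝ) * Real.sqrt n) ^ (n : ℝ) = 2 ^ n * (n : ℝ) ^ ((n : ℝ) / 2) := by
        rw [Real.mul_rpow (by norm_num) (Real.sqrt_nonneg _), Real.rpow_natCast 2 n,
          Real.sqrt_eq_rpow, ← Real.rpow_mul hn0.le,
          show (1 : ℝ) / 2 * n = (n : ℝ) / 2 by ring]
      rw [Real.mul_rpow (by positivity) (by positivity), f1, f2, Real.rpow_one]
  · -- m_G ≤ 2^{n/2} m_P
    apply mH_comp (heatBall n) (parBox n) 1 (n : ℝ) ((2 : ℝ) ^ ((n : ℝ) / 2))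
      (by positivity) (fun x ρ => (x.1, x.2 + ρ ^ 2))
      (fun ρ => (2 : ℝ) ^ ((n : ℝ) / 2) * ρ ^ (n : ℝ))
    · exact fun x ρ hρ => parBox_subset n hn x ρ hρ
    · intro ρ hρ
      positivity
    · intro δ' hδ'
      have hp2 : (0 : ℝ) < (2 : ℝ) ^ ((n : ℝ) / 2) := by positivity
      refine ⟨(δ' / (2 : ℝ) ^ ((n : ℝ) / 2)) ^ ((1 : ℝ) / n),
        Real.rpow_pos_of_pos (by positivity) _, fun ρ hρ hρδ => ?_⟩
      have h1 : ρ ^ (n : ℝ) < δ' / (2 : ℝ) ^ ((n : ℝ) / 2) := by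
        have h2 := Real.rpow_lt_rpow hρ.le hρδ hn0
        rwa [rpow_one_div_nat hn (by positivity)] at h2
      calc (2 : ℝ) ^ ((n : ℝ) / 2) * ρ ^ (n : ℝ)
          < (2 : ℝ) ^ ((n : ℝ) / 2) * (δ' / (2 : ℝ) ^ ((n : ℝ) / 2)) :=
            mul_lt_mul_of_pos_left h1 hp2
        _ = δ' := by field_simp
    · intro ρ hρ
      rw [Real.rpow_one]
end

section
/- Let X be a locally compact space with countable base and let G : X × X → [0,∞] satisfy: (i) G(·,y) is lower semicontinuous with limsup_{x→y} G(x,y) = ∞ for each y; (ii) G is continuous off the diagonal and Borel measurable; (iii) for every compact K ⊆ X there is a compact L ⊆ X with G bounded on (X∖L) × K. If A ⊆ X satisfies m_G(A) < ∞, then A is contained in a G-semipolar Borel set. -/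
open MeasureTheory Filter
open scoped ENNReal Topology

set_option maxHeartbeats 2000000

/-- The `G`-ball `B(x,ρ) = {y : G(x,y) > 1/ρ}`. -/
def Gball {X : Type*} (G : X → X → ℝ≥0∞) (x : X) (ρ : ℝ) : Set X :=
  {y | (ENNReal.ofReal ρ)⁻¹ < G x y}

/-- The intrinsic Hausdorff measure `m_G`. -/
noncomputable def mG {X : Type*} (G : X → X → ℝ≥0∞) (A : Set X) : ℝ≥0∞ :=
  ⨆ (δ : ℝ) (_ : 0 < δ),
    ⨅ (c : ℕ → X × ℝ) (_ : A ⊆ ⋃ j, Gball G (c j).1 (c j).2)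
      (_ : ∀ j, 0 < (c j).2 ∧ (c j).2 < δ), ∑' j, ENNReal.ofReal (c j).2

/-- A Borel set `A` is `G`-semipolar if there is no nonzero (positive Radon) measure `μ`
with `μ(X \ A) = 0` such that `Gμ := ∫ G(·,y) dμ(y)` is a continuous real function. -/
def GSemipolar {X : Type*} [TopologicalSpace X] [MeasurableSpace X]
    (G : X → X → ℝ≥0∞) (A : Set X) : Prop :=
  ¬ ∃ μ : Measure X, μ ≠ 0 ∧ μ.Regular ∧ μ Aᶜ = 0 ∧
      (∀ x, ∫⁻ y, G x y ∂μ ≠ ⊤) ∧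
      Continuous (fun x => (∫⁻ y, G x y ∂μ).toReal)

/-- Theorem 3.3 (main result): under the regularity assumptions (i)–(iii) on `G`,
every set `A` with `m_G(A) < ∞` is contained in a `G`-semipolar Borel set. -/
theorem stmt_19 {X : Type*} [TopologicalSpace X] [LocallyCompactSpace X]
    [SecondCountableTopology X] [T2Space X] [MeasurableSpace X] [BorelSpace X]
    (G : X → X → ℝ≥0∞)
    -- (i): `G(·,y)` is lower semicontinuous and `limsup_{x→y} G(x,y) = ∞`
    (hlsc : ∀ y, LowerSemicontinuous fun x => G x y)
    (hlimsup : ∀ y, limsup (fun x => G x y) (𝓝[≠] y) = ⊤)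
    -- (ii): `G` is continuous outside the diagonal and Borel measurable
    (hcont : ContinuousOn (fun q : X × X => G q.1 q.2) {q | q.1 ≠ q.2})
    (hmeas : Measurable fun q : X × X => G q.1 q.2)
    -- (iii): for every compact `K` there is a compact `L` with `G` bounded on `(X∖L)×K`
    (hbd : ∀ K : Set X, IsCompact K → ∃ L : Set X, IsCompact L ∧
      ∃ a : ℝ≥0∞, a ≠ ⊤ ∧ ∀ x ∉ L, ∀ y ∈ K, G x y ≤ a)
    (A : Set X) (hA : mG G A < ⊤) :
    ∃ B : Set X, A ⊆ B ∧ MeasurableSet B ∧ GSemipolar G B := by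
  classical
  set m := mG G A with hm
  have hGx : ∀ x : X, Measurable fun y => G x y := fun x =>
    hmeas.comp measurable_prodMk_left
  have hball_ms : ∀ (x : X) (ρ : ℝ), MeasurableSet (Gball G x ρ) := fun x ρ =>
    measurableSet_lt measurable_const (hGx x)
  have hop : IsOpen {q : X × X | q.1 ≠ q.2} := isClosed_diagonal.isOpen_compl
  -- Step A: covers for each n
  have hcov : ∀ n : ℕ, ∃ c : ℕ → X × ℝ,
      (A ⊆ ⋃ j, Gball G (c j).1 (c j).2) ∧
      (∀ j, 0 < (c j).2 ∧ (c j).2 < 1 / (n + 1 : ℝ)) ∧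
      ∑' j, ENNReal.ofReal (c j).2 < m + 1 := by
    intro n
    have h1 : (⨅ (c : ℕ → X × ℝ) (_ : A ⊆ ⋃ j, Gball G (c j).1 (c j).2)
        (_ : ∀ j, 0 < (c j).2 ∧ (c j).2 < 1 / (n + 1 : ℝ)),
          ∑' j, ENNReal.ofReal (c j).2) ≤ m := by
      rw [hm, mG]
      exact le_iSup_of_le (1 / (n + 1 : ℝ)) (le_iSup_of_le (by positivity) le_rfl)
    have h2 := h1.trans_lt (ENNReal.lt_add_right hA.ne one_ne_zero)
    simp only [iInf_lt_iff] at h2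
    obtain ⟨c, hc1, hc2, hc3⟩ := h2
    exact ⟨c, hc1, hc2, hc3⟩
  choose cov hcovA hcovb hcovs using hcov
  set B := ⋂ n, ⋃ j, Gball G (cov n j).1 (cov n j).2 with hB
  refine ⟨B, Set.subset_iInter hcovA, MeasurableSet.iInter fun n =>
    MeasurableSet.iUnion fun j => hball_ms _ _, ?_⟩
  rintro ⟨μ, hμ0, hreg, hμB, hfin, hcont'⟩
  haveI := hreg.toIsFiniteMeasureOnCompacts
  set u : X → ℝ≥0∞ := fun x => ∫⁻ y, G x y ∂μ with hu
  have hufin : ∀ x, u x ≠ ⊤ := hfin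
  have hucont : Continuous u := by
    have : u = fun x => ENNReal.ofReal ((u x).toReal) :=
      funext fun x => (ENNReal.ofReal_toReal (hufin x)).symm
    rw [this]
    exact ENNReal.continuous_ofReal.comp hcont'
  have hutd : ∀ x, Tendsto u (𝓝 x) (𝓝 (u x)) := fun x => hucont.continuousAt
  -- Step 1: no atoms
  have hatom : ∀ x, μ {x} = 0 := by
    intro x
    by_contra ht
    have htne : μ {x} ≠ ⊤ := isCompact_singleton.measure_lt_top.ne
    have hlow : ∀ z, G z x * μ {x} ≤ u z := by
      intro z
      calc G z x * μ {x} = ∫⁻ y in {x}, G z y ∂μ := (lintegral_singleton _ _).symm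
        _ ≤ u z := setLIntegral_le_lintegral _ _
    have hev : ∀ᶠ z in 𝓝 x, u z < u x + 1 :=
      (hutd x).eventually_lt_const (ENNReal.lt_add_right (hufin x) one_ne_zero)
    have hub : limsup (fun z => G z x) (𝓝[≠] x) ≤ (u x + 1) / μ {x} := by
      rw [limsup_eq]
      apply sInf_le
      filter_upwards [hev.filter_mono nhdsWithin_le_nhds] with z hz
      rw [ENNReal.le_div_iff_mul_le (Or.inl ht) (Or.inl htne)]
      exact (hlow z).trans hz.le
    rw [hlimsup x] at hub
    exact (ENNReal.div_lt_top (ENNReal.add_ne_top.mpr ⟨hufin x, ENNReal.one_ne_top⟩) ht).ne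
      (top_le_iff.mp hub)
  -- Step 2: every compact set is null
  have hK0 : ∀ K : Set X, IsCompact K → μ K = 0 := by
    intro K hK
    by_contra hc0
    have hcpos : 0 < μ K := zero_lt_iff.mpr hc0
    have hcfin : μ K ≠ ⊤ := hK.measure_lt_top.ne
    obtain ⟨L, hL, a, ha, hbdd⟩ := hbd K hK
    set S : ℝ≥0∞ := m + 1 with hS
    have hS0 : S ≠ 0 := by simp [hS]
    have hStop : S ≠ ⊤ := ENNReal.add_ne_top.mpr ⟨hA.ne, ENNReal.one_ne_top⟩
    set ε : ℝ≥0∞ := μ K / S / 2 with hε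
    have hdiv0 : μ K / S ≠ 0 := by
      simp [ENNReal.div_eq_zero_iff, hc0, hStop]
    have hdivtop : μ K / S ≠ ⊤ := by
      simp [ENNReal.div_eq_top, hcfin, hS0]
    have hε0 : ε ≠ 0 := by
      simp [hε, ENNReal.div_eq_zero_iff, hdiv0]
    have hεtop : ε ≠ ⊤ := by
      simp [hε, ENNReal.div_eq_top, hdiv0, hdivtop]
    have hεS : ε * S < μ K := by
      have h1 : ε < μ K / S := ENNReal.half_lt_self hdiv0 hdivtop
      exact ENNReal.mul_lt_of_lt_div h1
    -- choose r > 0 with ofReal r ≤ a⁻¹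
    obtain ⟨r, hr0, hra⟩ : ∃ r : ℝ, 0 < r ∧ ENNReal.ofReal r ≤ a⁻¹ := by
      rcases le_or_gt 1 a⁻¹ with h | h
      · exact ⟨1, one_pos, by simpa using h⟩
      · have hinv0 : 0 < a⁻¹ := ENNReal.inv_pos.mpr ha
        have hinvt : a⁻¹ ≠ ⊤ := h.ne_top
        exact ⟨(a⁻¹).toReal, ENNReal.toReal_pos hinv0.ne' hinvt,
          by rw [ENNReal.ofReal_toReal hinvt]⟩
    -- balls of small radius centered off L miss K
    have hball : ∀ x' ∉ L, ∀ ρ : ℝ, 0 < ρ → ρ < r → K ∩ Gball G x' ρ = ∅ := by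
      intro x' hx' ρ hρ0 hρr
      rw [Set.eq_empty_iff_forall_notMem]
      rintro y ⟨hyK, hyb⟩
      have h1 : G x' y ≤ a := hbdd x' hx' y hyK
      have h2 : ENNReal.ofReal ρ ≤ a⁻¹ :=
        le_trans (ENNReal.ofReal_le_ofReal hρr.le) hra
      have h3 : a ≤ (ENNReal.ofReal ρ)⁻¹ := by
        rw [← inv_inv a]
        exact ENNReal.inv_le_inv.mpr h2
      have h4 : (ENNReal.ofReal ρ)⁻¹ < G x' y := hyb
      exact absurd (h3.trans_lt (h4.trans_le h1)) (lt_irrefl _)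
    obtain ⟨N, hN⟩ : ∃ N : ℕ, 1 / (N + 1 : ℝ) < r := exists_nat_one_div_lt hr0
    -- selection of bad balls
    have hsel : ∀ k : ℕ, ∃ p : X × ℝ, p.1 ∈ L ∧ 0 < p.2 ∧ p.2 < 1 / ((N + k : ℕ) + 1 : ℝ) ∧
        ε < ∫⁻ y in Gball G p.1 p.2, G p.1 y ∂μ := by
      intro k
      set n : ℕ := N + k with hn'
      have hn : N ≤ n := Nat.le_add_right _ _
      by_contra hno
      push_neg at hno
      have hsmall : (1 : ℝ) / (n + 1) ≤ 1 / (N + 1) := by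
        apply one_div_le_one_div_of_le (by positivity)
        have : (N : ℝ) ≤ n := Nat.cast_le.mpr hn
        linarith
      have key : ∀ j, μ (K ∩ Gball G (cov n j).1 (cov n j).2) ≤
          ENNReal.ofReal (cov n j).2 * ε := by
        intro j
        rcases Set.eq_empty_or_nonempty (K ∩ Gball G (cov n j).1 (cov n j).2) with he | hne
        · simp [he]
        · obtain ⟨hρ0, hρn⟩ := hcovb n j
          have hρr : (cov n j).2 < r := lt_of_lt_of_le hρn (hsmall.trans hN.le)
          have hxL : (cov n j).1 ∈ L := by
            by_contra hx
            rw [hball _ hx _ hρ0 hρr] at hne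
            exact hne.ne_empty rfl
          have hint : ∫⁻ y in Gball G (cov n j).1 (cov n j).2, G (cov n j).1 y ∂μ ≤ ε :=
            hno ((cov n j).1, (cov n j).2) hxL hρ0 hρn
          have hρne : ENNReal.ofReal (cov n j).2 ≠ 0 := (ENNReal.ofReal_pos.mpr hρ0).ne'
          calc μ (K ∩ Gball G (cov n j).1 (cov n j).2)
              ≤ μ (Gball G (cov n j).1 (cov n j).2) := measure_mono Set.inter_subset_right
            _ = ∫⁻ _ in Gball G (cov n j).1 (cov n j).2, 1 ∂μ := (setLIntegral_one _).symm
            _ ≤ ∫⁻ y in Gball G (cov n j).1 (cov n j).2,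
                ENNReal.ofReal (cov n j).2 * G (cov n j).1 y ∂μ := by
                apply setLIntegral_mono' (hball_ms _ _)
                intro y hy
                calc (1 : ℝ≥0∞) = ENNReal.ofReal (cov n j).2 * (ENNReal.ofReal (cov n j).2)⁻¹ :=
                      (ENNReal.mul_inv_cancel hρne ENNReal.ofReal_ne_top).symm
                  _ ≤ ENNReal.ofReal (cov n j).2 * G (cov n j).1 y :=
                      mul_le_mul_right (le_of_lt hy) _
            _ = ENNReal.ofReal (cov n j).2 *
                ∫⁻ y in Gball G (cov n j).1 (cov n j).2, G (cov n j).1 y ∂μ :=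
                lintegral_const_mul _ (hGx _)
            _ ≤ ENNReal.ofReal (cov n j).2 * ε := mul_le_mul_right hint _
      have hfinal : μ K ≤ ε * S := by
        calc μ K ≤ μ ((K ∩ B) ∪ Bᶜ) := measure_mono (fun y hy => by
              by_cases hyB : y ∈ B
              · exact Or.inl ⟨hy, hyB⟩
              · exact Or.inr hyB)
          _ ≤ μ (K ∩ B) + μ Bᶜ := measure_union_le _ _
          _ = μ (K ∩ B) := by rw [hμB, add_zero]
          _ ≤ μ (⋃ j, K ∩ Gball G (cov n j).1 (cov n j).2) := measure_mono (fun y hy => by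
              have : y ∈ ⋃ j, Gball G (cov n j).1 (cov n j).2 :=
                Set.mem_iInter.mp hy.2 n
              obtain ⟨t, ⟨j, rfl⟩, hyt⟩ := this
              exact Set.mem_iUnion.mpr ⟨j, hy.1, hyt⟩)
          _ ≤ ∑' j, μ (K ∩ Gball G (cov n j).1 (cov n j).2) := measure_iUnion_le _
          _ ≤ ∑' j, ENNReal.ofReal (cov n j).2 * ε := ENNReal.tsum_le_tsum key
          _ = (∑' j, ENNReal.ofReal (cov n j).2) * ε := ENNReal.tsum_mul_right
          _ ≤ S * ε := mul_le_mul_left (hcovs n).le _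
          _ = ε * S := mul_comm _ _
      exact absurd (hfinal.trans_lt hεS) (lt_irrefl _)
    choose p hp1 hp2 hp3 hp4 using hsel
    have hzL : ∀ k, (p k).1 ∈ L := hp1
    obtain ⟨x, hxL, φ, hφm, hwx⟩ := hL.tendsto_subseq hzL
    set w : ℕ → X := (fun k => (p k).1) ∘ φ with hw
    set s : ℕ → ℝ := fun k => (p (φ k)).2 with hs
    have hs0 : ∀ k, 0 < s k := fun k => hp2 _
    have hsmall : ∀ k, s k < 1 / (k + 1 : ℝ) := by
      intro k
      have h1 : s k < 1 / ((N + φ k : ℕ) + 1 : ℝ) := hp3 _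
      have h2 : (1 : ℝ) / ((N + φ k : ℕ) + 1) ≤ 1 / (k + 1 : ℝ) := by
        apply one_div_le_one_div_of_le (by positivity)
        have hk : (k : ℝ) ≤ (φ k : ℝ) := Nat.cast_le.mpr hφm.le_apply
        have : ((N + φ k : ℕ) : ℝ) = (N : ℝ) + (φ k : ℝ) := by push_cast; ring
        rw [this]
        have hN0 : (0:ℝ) ≤ N := Nat.cast_nonneg _
        linarith
      exact h1.trans_le h2
    have hεlt : ∀ k, ε < ∫⁻ y in Gball G (w k) (s k), G (w k) y ∂μ := fun k => hp4 _
    -- radii go to 0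
    have hstend : Tendsto (fun k => ENNReal.ofReal (s k)) atTop (𝓝 0) := by
      have hup : Tendsto (fun k : ℕ => ENNReal.ofReal (1 / (k + 1 : ℝ))) atTop (𝓝 0) := by
        have h := ENNReal.tendsto_ofReal tendsto_one_div_add_atTop_nhds_zero_nat
        simpa using h
      exact tendsto_of_tendsto_of_tendsto_of_le_of_le tendsto_const_nhds hup
        (fun k => zero_le) (fun k => ENNReal.ofReal_le_ofReal (hsmall k).le)
    have hinvtend : Tendsto (fun k => (ENNReal.ofReal (s k))⁻¹) atTop (𝓝 ⊤) := by
      simpa using ENNReal.tendsto_inv_iff.mpr hstend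
    set T : ℕ → Set X := fun k => Gball G (w k) (s k) with hT
    -- lower bound: ∫ over complement + ε ≤ u (w k)
    have hub : ∀ k, ∫⁻ y in (T k)ᶜ, G (w k) y ∂μ + ε ≤ u (w k) := by
      intro k
      have := lintegral_add_compl (fun y => G (w k) y) (hball_ms (w k) (s k)) (μ := μ)
      calc ∫⁻ y in (T k)ᶜ, G (w k) y ∂μ + ε
          ≤ ∫⁻ y in (T k)ᶜ, G (w k) y ∂μ + ∫⁻ y in T k, G (w k) y ∂μ :=
            add_le_add_right (hεlt k).le _
        _ = u (w k) := by rw [add_comm]; exact this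
    -- a.e. liminf lower bound
    have hae : ∀ᵐ y ∂μ, G x y ≤
        liminf (fun k => ((T k)ᶜ).indicator (fun y' => G (w k) y') y) atTop := by
      have h1 : ∀ᵐ y ∂μ, y ≠ x := by
        rw [ae_iff]
        simpa using hatom x
      have h2 : ∀ᵐ y ∂μ, G x y < ⊤ := ae_lt_top (hGx x) (hufin x)
      filter_upwards [h1, h2] with y hy1 hy2
      have hxy : (x, y) ∈ {q : X × X | q.1 ≠ q.2} := Ne.symm hy1
      have hcy : Tendsto (fun k => G (w k) y) atTop (𝓝 (G x y)) := by
        have hca : ContinuousAt (fun q : X × X => G q.1 q.2) (x, y) :=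
          hcont.continuousAt (hop.mem_nhds hxy)
        exact hca.tendsto.comp (hwx.prodMk_nhds tendsto_const_nhds)
      have hev : ∀ᶠ k in atTop, y ∈ (T k)ᶜ := by
        have h3 : ∀ᶠ k in atTop, G (w k) y < G x y + 1 :=
          hcy.eventually_lt_const (ENNReal.lt_add_right hy2.ne one_ne_zero)
        have h4 : ∀ᶠ k in atTop, G x y + 1 ≤ (ENNReal.ofReal (s k))⁻¹ := by
          have hlt : G x y + 1 < ⊤ := ENNReal.add_lt_top.mpr ⟨hy2, ENNReal.one_lt_top⟩
          filter_upwards [hinvtend.eventually_const_le hlt] with k hk using hk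
        filter_upwards [h3, h4] with k h3 h4
        simp only [T, Gball, Set.mem_compl_iff, Set.mem_setOf_eq, not_lt]
        exact le_trans (h3.trans_le h4).le le_rfl
      have heq : liminf (fun k => ((T k)ᶜ).indicator (fun y' => G (w k) y') y) atTop
          = liminf (fun k => G (w k) y) atTop :=
        liminf_congr (hev.mono fun k hk => Set.indicator_of_mem hk _)
      rw [heq, hcy.liminf_eq]
    -- Fatou
    have hFatou : u x ≤ liminf (fun k => ∫⁻ y in (T k)ᶜ, G (w k) y ∂μ) atTop := by
      have hmeask : ∀ k, Measurable fun y => ((T k)ᶜ).indicator (fun y' => G (w k) y') y :=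
        fun k => (hGx (w k)).indicator (hball_ms _ _).compl
      calc u x = ∫⁻ y, G x y ∂μ := rfl
        _ ≤ ∫⁻ y, liminf (fun k => ((T k)ᶜ).indicator (fun y' => G (w k) y') y) atTop ∂μ :=
            lintegral_mono_ae hae
        _ ≤ liminf (fun k => ∫⁻ y, ((T k)ᶜ).indicator (fun y' => G (w k) y') y ∂μ) atTop :=
            lintegral_liminf_le hmeask
        _ = liminf (fun k => ∫⁻ y in (T k)ᶜ, G (w k) y ∂μ) atTop := by
            apply liminf_congr
            filter_upwards with k
            exact lintegral_indicator (hball_ms _ _).compl _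
    -- final contradiction
    have huw : Tendsto (fun k => u (w k)) atTop (𝓝 (u x)) := (hutd x).comp hwx
    have hεhalf0 : ε / 2 ≠ 0 := by
      simp [ENNReal.div_eq_zero_iff, hε0]
    rcases lt_or_ge (u x) ε with hcase | hcase
    · -- u x < ε : eventually u (w k) < ε, but u (w k) ≥ ε
      have h1 : ∀ᶠ k in atTop, u (w k) < ε := huw.eventually_lt_const hcase
      obtain ⟨k, hk⟩ := h1.exists
      have h2 : ε ≤ u (w k) := le_trans (le_add_self) (hub k)
      exact absurd (h2.trans_lt hk) (lt_irrefl _)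
    · -- ε ≤ u x
      have hd : ε / 2 ≤ u x := le_trans (ENNReal.half_le_self) hcase
      have hsub : u x - ε / 2 < liminf (fun k => ∫⁻ y in (T k)ᶜ, G (w k) y ∂μ) atTop := by
        refine lt_of_lt_of_le ?_ hFatou
        exact ENNReal.sub_lt_self (hufin x) (lt_of_lt_of_le (zero_lt_iff.mpr hε0) hcase).ne'
          hεhalf0
      have h1 : ∀ᶠ k in atTop, u x - ε / 2 < ∫⁻ y in (T k)ᶜ, G (w k) y ∂μ :=
        eventually_lt_of_lt_liminf hsub
      have h2 : ∀ᶠ k in atTop, u (w k) < u x + ε / 2 :=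
        huw.eventually_lt_const (ENNReal.lt_add_right (hufin x) hεhalf0)
      obtain ⟨k, hk1, hk2⟩ := (h1.and h2).exists
      have h3 : u x + ε / 2 ≤ u (w k) := by
        calc u x + ε / 2 = (u x - ε / 2) + ε / 2 + ε / 2 := by
              rw [tsub_add_cancel_of_le hd]
          _ = (u x - ε / 2) + ε := by rw [add_assoc, ENNReal.add_halves]
          _ ≤ ∫⁻ y in (T k)ᶜ, G (w k) y ∂μ + ε := add_le_add_left hk1.le _
          _ ≤ u (w k) := hub k
      exact absurd (h3.trans_lt hk2) (lt_irrefl _)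
  -- conclude μ = 0
  have huniv : μ Set.univ = 0 := by
    by_contra h0
    obtain ⟨K, _, hKc, hKpos⟩ := hreg.innerRegular isOpen_univ 0 (zero_lt_iff.mpr h0)
    exact absurd (hK0 K hKc) hKpos.ne'
  exact hμ0 (Measure.measure_univ_eq_zero.mp huniv)
end
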